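/- Let Γ be a group and Δ ≤ Λ ≤ Γ nested subgroups. Suppose that for every ε' > 0 there exist a finite subset F' ⊆ Γ and δ' > 0 such that every normalized Δ-invariant function of positive type φ : Γ → ℂ with |φ(t) − 1| ≤ δ' for all t ∈ F' satisfies Re(1 − φ(γ)) ≤ ε' for all γ ∈ Λ. Then for every ε > 0 there exist a finite subset F ⊆ Γ and δ > 0 such that for every unitary representation (π, H) of Γ and every Δ-invariant (F,δ)-invariant unit vector ξ ∈ H there exists a Λ-invariant vector η ∈ H with ‖ξ − η‖ ≤ ε. -/

import Mathlib

open scoped InnerProductSpace ComplexConjugate ComplexOrder BigOperators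

section Defs

variable {Γ : Type} [Group Γ]

/-- A complex-valued function of positive type on a group. -/
def IsPosType (φ : Γ → ℂ) : Prop :=
  ∀ (n : ℕ), 1 ≤ n → ∀ (γ : Fin n → Γ) (c : Fin n → ℂ),
    0 ≤ ∑ i, ∑ j, conj (c i) * c j * φ ((γ i)⁻¹ * γ j)

/-- A real-valued function of positive type on a group. -/
def IsRealPosType (φ : Γ → ℝ) : Prop :=
  (∀ γ : Γ, φ γ⁻¹ = φ γ) ∧
  ∀ (n : ℕ), 1 ≤ n → ∀ (γ : Fin n → Γ) (c : Fin n → ℝ),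
    0 ≤ ∑ i, ∑ j, c i * c j * φ ((γ i)⁻¹ * γ j)

/-- A complex-valued function of conditionally negative type on a group. -/
def IsCondNegType (ψ : Γ → ℂ) : Prop :=
  ψ 1 = 0 ∧ (∀ γ : Γ, ψ γ⁻¹ = conj (ψ γ)) ∧
  ∀ (n : ℕ), 2 ≤ n → ∀ (γ : Fin n → Γ) (c : Fin n → ℂ), (∑ i, c i) = 0 →
    ∑ i, ∑ j, conj (c i) * c j * ψ ((γ i)⁻¹ * γ j) ≤ 0

/-- A real-valued function of conditionally negative type on a group. -/
def IsRealCondNegType (ψ : Γ → ℝ) : Prop :=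
  ψ 1 = 0 ∧ (∀ γ : Γ, ψ γ⁻¹ = ψ γ) ∧
  ∀ (n : ℕ), 2 ≤ n → ∀ (γ : Fin n → Γ) (c : Fin n → ℝ), (∑ i, c i) = 0 →
    ∑ i, ∑ j, c i * c j * ψ ((γ i)⁻¹ * γ j) ≤ 0

/-- A function on Γ is Δ-(bi-)invariant if it is unchanged under left and right
multiplication by elements of Δ. -/
def IsInvariantUnder {α : Type*} (Δ : Subgroup Γ) (ψ : Γ → α) : Prop :=
  ∀ d₀ ∈ Δ, ∀ d₁ ∈ Δ, ∀ γ : Γ, ψ (d₀ * γ * d₁) = ψ γ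

/-- The triple Δ ≤ Λ ≤ Γ has property (T): every unitary representation of Γ with
almost invariant Δ-invariant unit vectors has a Λ-invariant unit vector. -/
def HasPropertyT (Δ Λ : Subgroup Γ) : Prop :=
  ∀ (H : Type) [NormedAddCommGroup H] [InnerProductSpace ℂ H] [CompleteSpace H]
    (π : Γ →* (H ≃ₗᵢ[ℂ] H)),
    (∀ (F : Finset Γ) (ε : ℝ), 0 < ε →
      ∃ ξ : H, ‖ξ‖ = 1 ∧ (∀ d ∈ Δ, π d ξ = ξ) ∧ ∀ γ ∈ F, ‖π γ ξ - ξ‖ ≤ ε) →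
    ∃ η : H, ‖η‖ = 1 ∧ ∀ l ∈ Λ, π l η = η

end Defs

section Aux

variable {H : Type} [NormedAddCommGroup H] [InnerProductSpace ℂ H]

lemma gram_nonneg {n : ℕ} (w : Fin n → H) (c : Fin n → ℂ) :
    0 ≤ ∑ i, ∑ j, conj (c i) * c j * ⟪w i, w j⟫_ℂ := by
  have h : ∑ i, ∑ j, conj (c i) * c j * ⟪w i, w j⟫_ℂ
      = ⟪∑ i, c i • w i, ∑ j, c j • w j⟫_ℂ := by
    rw [sum_inner]
    refine Finset.sum_congr rfl fun i _ => ?_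
    rw [inner_sum]
    refine Finset.sum_congr rfl fun j _ => ?_
    rw [inner_smul_left, inner_smul_right]
    ring
  rw [h, Complex.le_def]
  constructor
  · simpa using (inner_self_nonneg (𝕜 := ℂ) (x := ∑ i, c i • w i))
  · exact (inner_self_im (𝕜 := ℂ) (∑ i, c i • w i)).symm

/-- uniqueness of the minimal norm point of a convex set -/
lemma min_norm_unique {C : Set H} (hC : Convex ℝ C) {d : ℝ}
    (hd : ∀ w ∈ C, d ≤ ‖w‖) {v v' : H} (hv : v ∈ C) (hv' : v' ∈ C)
    (hnv : ‖v‖ = d) (hnv' : ‖v'‖ = d) : v = v' := by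
  have hm : (1/2 : ℝ) • v + (1/2 : ℝ) • v' ∈ C := by
    apply hC hv hv' (by norm_num) (by norm_num) (by norm_num)
  have hmn : d ≤ ‖(1/2 : ℝ) • v + (1/2 : ℝ) • v'‖ := hd _ hm
  have hpar := parallelogram_law_with_norm ℂ v v'
  have hvv' : ‖v + v'‖ = 2 * ‖(1/2 : ℝ) • v + (1/2 : ℝ) • v'‖ := by
    rw [← norm_smul_of_nonneg (by norm_num : (0:ℝ) ≤ 2)]
    congr 1
    rw [smul_add, smul_smul, smul_smul]
    norm_num
  have h2 : ‖v - v'‖ ^ 2 ≤ 0 := by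
    have h3 : (2*d)^2 ≤ ‖v + v'‖^2 := by
      rw [hvv']
      have hd0 : 0 ≤ d := hnv ▸ norm_nonneg v
      nlinarith [norm_nonneg ((1/2 : ℝ) • v + (1/2 : ℝ) • v')]
    rw [hnv, hnv'] at hpar
    nlinarith [hpar, h3, sq ‖v + v'‖, sq ‖v - v'‖]
  have : ‖v - v'‖ = 0 := by nlinarith [norm_nonneg (v - v'), sq_nonneg ‖v - v'‖]
  exact sub_eq_zero.mp (norm_eq_zero.mp this)

end Aux


/-- If normalized Δ-invariant positive type functions close to 1 on a suitable
finite set are uniformly close to 1 on Λ, then almost-invariant Δ-invariant unit vectors of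
unitary representations are close to Λ-invariant vectors. -/
theorem stmt5 (Γ : Type) [Group Γ] (Δ Λ : Subgroup Γ) (hΔΛ : Δ ≤ Λ)
    (hyp : ∀ ε' > (0 : ℝ), ∃ (F' : Finset Γ) (δ' : ℝ), 0 < δ' ∧
      ∀ φ : Γ → ℂ, IsPosType φ → φ 1 = 1 → IsInvariantUnder Δ φ →
        (∀ t ∈ F', ‖φ t - 1‖ ≤ δ') →
        ∀ γ ∈ Λ, (1 - φ γ).re ≤ ε') :
    ∀ ε > (0 : ℝ), ∃ (F : Finset Γ) (δ : ℝ), 0 < δ ∧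
      ∀ (H : Type) [NormedAddCommGroup H] [InnerProductSpace ℂ H] [CompleteSpace H]
        (π : Γ →* (H ≃ₗᵢ[ℂ] H)) (ξ : H),
        ‖ξ‖ = 1 → (∀ d ∈ Δ, π d ξ = ξ) → (∀ γ ∈ F, ‖π γ ξ - ξ‖ ≤ δ) →
        ∃ η : H, (∀ l ∈ Λ, π l η = η) ∧ ‖ξ - η‖ ≤ ε := by
  intro ε hε
  obtain ⟨F', δ', hδ'pos, hmain⟩ := hyp (ε ^ 2 / 2) (by positivity)
  refine ⟨F', δ', hδ'pos, ?_⟩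
  intro H _ _ _ π ξ hξnorm hΔξ hFξ
  set φ : Γ → ℂ := fun γ => ⟪ξ, π γ ξ⟫_ℂ with hφdef
  -- π applied to products
  have happ : ∀ a b : Γ, ∀ x : H, π (a * b) x = π a (π b x) := by
    intro a b x; rw [map_mul]; rfl
  have hpos : ∀ (n : ℕ), 1 ≤ n → ∀ (γ : Fin n → Γ) (c : Fin n → ℂ),
      0 ≤ ∑ i, ∑ j, conj (c i) * c j * φ ((γ i)⁻¹ * γ j) := by
    intro n _ γ c
    have h1 : ∀ i j : Fin n, φ ((γ i)⁻¹ * γ j) = ⟪π (γ i) ξ, π (γ j) ξ⟫_ℂ := by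
      intro i j
      have h2 : π (γ i) (π ((γ i)⁻¹ * γ j) ξ) = π (γ j) ξ := by
        rw [← happ, ← mul_assoc, mul_inv_cancel, one_mul]
      calc φ ((γ i)⁻¹ * γ j) = ⟪π (γ i) ξ, π (γ i) (π ((γ i)⁻¹ * γ j) ξ)⟫_ℂ :=
            (LinearIsometryEquiv.inner_map_map _ _ _).symm
        _ = ⟪π (γ i) ξ, π (γ j) ξ⟫_ℂ := by rw [h2]
    simp_rw [h1]
    exact gram_nonneg _ _
  have hone : φ 1 = 1 := by
    simp only [hφdef, map_one]
    have : (1 : H ≃ₗᵢ[ℂ] H) ξ = ξ := rfl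
    rw [this, inner_self_eq_norm_sq_to_K, hξnorm]
    norm_num
  have hinv : ∀ d₀ ∈ Δ, ∀ d₁ ∈ Δ, ∀ γ : Γ, φ (d₀ * γ * d₁) = φ γ := by
    intro d₀ hd₀ d₁ hd₁ γ
    simp only [hφdef]
    rw [happ, happ, hΔξ d₁ hd₁]
    calc ⟪ξ, π d₀ (π γ ξ)⟫_ℂ = ⟪π d₀ ξ, π d₀ (π γ ξ)⟫_ℂ := by rw [hΔξ d₀ hd₀]
      _ = ⟪ξ, π γ ξ⟫_ℂ := LinearIsometryEquiv.inner_map_map _ _ _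
  have hclose : ∀ t ∈ F', ‖φ t - 1‖ ≤ δ' := by
    intro t ht
    have h1 : φ t - 1 = ⟪ξ, π t ξ - ξ⟫_ℂ := by
      rw [inner_sub_right]
      congr 1
      rw [inner_self_eq_norm_sq_to_K, hξnorm]; norm_num
    rw [h1]
    calc ‖⟪ξ, π t ξ - ξ⟫_ℂ‖ ≤ ‖ξ‖ * ‖π t ξ - ξ‖ := norm_inner_le_norm _ _
      _ ≤ δ' := by rw [hξnorm, one_mul]; exact hFξ t ht
  have key : ∀ γ ∈ Λ, ‖π γ ξ - ξ‖ ≤ ε := by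
    intro γ hγ
    have hre := hmain φ hpos hone hinv hclose γ hγ
    have hsq : ‖π γ ξ - ξ‖ ^ 2 = 2 * (1 - φ γ).re := by
      have hn : ‖π γ ξ‖ = 1 := by rw [(π γ).norm_map, hξnorm]
      have hns := @norm_sub_sq ℂ H _ _ _ (π γ ξ) ξ
      rw [hn, hξnorm] at hns
      have hsymm : RCLike.re ⟪π γ ξ, ξ⟫_ℂ = (φ γ).re := by
        rw [inner_re_symm]
        simp [hφdef, RCLike.re_to_complex]
      rw [hns, hsymm, Complex.sub_re, Complex.one_re]
      ring
    have h2 : ‖π γ ξ - ξ‖ ^ 2 ≤ ε ^ 2 := by rw [hsq]; nlinarith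
    nlinarith [norm_nonneg (π γ ξ - ξ)]
  -- the convex hull argument
  classical
  set S : Set H := Set.range (fun l : Λ => π l ξ) with hS
  set C : Set H := closure (convexHull ℝ S) with hC
  have hSC : S ⊆ C := (subset_convexHull ℝ S).trans subset_closure
  have hξS : ξ ∈ S := ⟨(1 : Λ), by simp⟩
  have hCne : C.Nonempty := ⟨ξ, hSC hξS⟩
  have hCconv : Convex ℝ C := (convex_convexHull ℝ S).closure
  have hCclosed : IsClosed C := isClosed_closure
  have hball : C ⊆ Metric.closedBall ξ ε := by
    apply closure_minimal _ Metric.isClosed_closedBall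
    apply convexHull_min _ (convex_closedBall ξ ε)
    rintro y ⟨l, rfl⟩
    simp only [Metric.mem_closedBall, dist_eq_norm]
    exact key l l.2
  -- C invariant
  have hCinv : ∀ l ∈ Λ, ∀ y ∈ C, π l y ∈ C := by
    intro l hl y hy
    have himg : (π l) '' (convexHull ℝ S) = convexHull ℝ ((π l) '' S) :=
      ((π l).toLinearEquiv.toLinearMap.restrictScalars ℝ).image_convexHull S
    have hlin : (π l) '' (convexHull ℝ S) ⊆ convexHull ℝ S := by
      rw [himg]
      apply convexHull_mono
      rintro z ⟨w, ⟨m, rfl⟩, rfl⟩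
      exact ⟨⟨l, hl⟩ * m, by simp only [Subgroup.coe_mul, map_mul]; rfl⟩
    have hcont : Continuous (π l) := (π l).continuous
    have hmem : π l y ∈ closure ((π l) '' (convexHull ℝ S)) :=
      image_closure_subset_closure_image hcont ⟨y, hy, rfl⟩
    exact closure_mono hlin hmem
  -- minimal norm point
  letI : InnerProductSpace ℝ H := InnerProductSpace.complexToReal
  have hcomp : IsComplete C := hCclosed.isComplete
  obtain ⟨η, hηC, hηmin⟩ := exists_norm_eq_iInf_of_complete_convex hCne hcomp hCconv 0
  simp only [zero_sub, norm_neg] at hηmin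
  have hd : ∀ w ∈ C, ‖η‖ ≤ ‖w‖ := by
    intro w hw
    rw [hηmin]
    have : Nonempty C := hCne.to_subtype
    have hbdd : BddBelow (Set.range fun w : C => ‖(w : H)‖) :=
      ⟨0, Set.forall_mem_range.2 fun _ => norm_nonneg _⟩
    exact ciInf_le hbdd ⟨w, hw⟩
  refine ⟨η, ?_, ?_⟩
  · intro l hl
    apply min_norm_unique hCconv hd (hCinv l hl η hηC) hηC ((π l).norm_map η) rfl
  · have h := hball hηC
    rw [Metric.mem_closedBall, dist_comm, dist_eq_norm] at h
    exact h
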